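/- arXiv:1105.5075 — 2 statements merged into one kernel-verified Lean document; each statement's English description precedes it below -/
import Mathlib

section
/- Let N ≥ 1, p ∈ (1, ∞), ε > 0, a, b ∈ ℝ^N, and define h(t) := t a + (1-t) b for t ∈ [0,1]. Then there exists C > 1, depending only on N and p, such that for all t ∈ [0,1], the derivative in t of the function t ↦ (ε + |h(t)|²)^{(p/2)-1} h(t) · (a - b) is at least (1/C) (ε + |t a + (1-t) b|²)^{(p/2)-1} |a - b|². -/
theorem stmt_3 (N : ℕ) (hN : 1 ≤ N) (p : ℝ) (hp1 : 1 < p) (ε : ℝ) (hε : 0 < ε)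
    (a b : EuclideanSpace ℝ (Fin N)) (h : ℝ → EuclideanSpace ℝ (Fin N))
    (hh : ∀ t : ℝ, h t = t • a + (1 - t) • b) :
    ∃ C : ℝ, 1 < C ∧ ∀ t ∈ Set.Icc (0 : ℝ) 1,
      deriv (fun s : ℝ => (ε + ‖h s‖ ^ 2) ^ (p / 2 - 1) * (inner ℝ (h s) (a - b) : ℝ)) t ≥
        (1 / C) * (ε + ‖t • a + (1 - t) • b‖ ^ 2) ^ (p / 2 - 1) * ‖a - b‖ ^ 2 := by
  have hp0 : 0 < p - 1 := by linarith
  refine ⟨2 + 1 / (p - 1), ?_, ?_⟩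
  · have : 0 < 1 / (p - 1) := by positivity
    linarith
  intro t ht
  -- derivative of h
  have hht : ∀ s : ℝ, HasDerivAt h (a - b) s := by
    intro s
    have h1 : HasDerivAt (fun u : ℝ => u • a + (1 - u) • b) ((1:ℝ) • a + (-1:ℝ) • b) s := by
      exact ((hasDerivAt_id s).smul_const a).add
        (((hasDerivAt_id s).const_sub 1).smul_const b)
    have h2 : (fun u : ℝ => u • a + (1 - u) • b) = h := by
      funext u; rw [hh u]
    rw [h2] at h1
    simpa [sub_eq_add_neg] using h1
  set ip : ℝ := inner ℝ (h t) (a - b) with hip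
  set A : ℝ := ε + ‖h t‖ ^ 2 with hA
  have hA0 : 0 < A := by positivity
  have hφ : HasDerivAt (fun s : ℝ => ε + ‖h s‖ ^ 2) (2 * ip) t := by
    have hfun : (fun s : ℝ => ε + ‖h s‖ ^ 2) = fun s => ε + (inner ℝ (h s) (h s) : ℝ) := by
      funext s; rw [real_inner_self_eq_norm_sq]
    rw [hfun]
    have h2 := ((hht t).inner ℝ (hht t)).const_add ε
    have e : (inner ℝ (h t) (a - b) : ℝ) + inner ℝ (a - b) (h t) = 2 * ip := by
      rw [← hip, real_inner_comm (h t) (a - b), ← hip]; ring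
    rw [e] at h2
    exact h2
  have hr : HasDerivAt (fun s : ℝ => (ε + ‖h s‖ ^ 2) ^ (p / 2 - 1))
      (2 * ip * (p / 2 - 1) * A ^ (p / 2 - 1 - 1)) t := by
    exact hφ.rpow_const (Or.inl hA0.ne')
  have hψ : HasDerivAt (fun s : ℝ => (inner ℝ (h s) (a - b) : ℝ)) (‖a - b‖ ^ 2) t := by
    have h0 := (hht t).inner ℝ (hasDerivAt_const t (a - b))
    rw [inner_zero_right, zero_add, real_inner_self_eq_norm_sq] at h0
    exact h0
  have hD := (hr.fun_mul hψ).deriv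
  rw [hD]
  have hhtv : h t = t • a + (1 - t) • b := hh t
  rw [← hhtv, ← hA, ← hip]
  -- now pure real arithmetic
  set q : ℝ := ‖a - b‖ ^ 2 with hq
  have hq0 : 0 ≤ q := by positivity
  set C : ℝ := 2 + 1 / (p - 1) with hC
  have hC0 : 0 < C := by positivity
  clear_value ip A q C
  have hCS : ip ^ 2 ≤ A * q := by
    have h1 : |ip| ≤ ‖h t‖ * ‖a - b‖ := by
      rw [hip]; exact abs_real_inner_le_norm _ _
    have h3 : ip ^ 2 ≤ (‖h t‖ * ‖a - b‖) ^ 2 := by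
      rw [← sq_abs]
      exact pow_le_pow_left₀ (abs_nonneg _) h1 2
    calc ip ^ 2 ≤ (‖h t‖ * ‖a - b‖) ^ 2 := h3
      _ = ‖h t‖ ^ 2 * q := by rw [hq]; ring
      _ ≤ A * q := by
        apply mul_le_mul_of_nonneg_right _ hq0
        rw [hA]; linarith
  have hB0 : 0 < A ^ (p / 2 - 1 - 1) := Real.rpow_pos_of_pos hA0 _
  have hpow : A ^ (p / 2 - 1) = A ^ (p / 2 - 1 - 1) * A := by
    rw [← Real.rpow_add_one hA0.ne']; congr 1; ring
  have hinv1 : 1 / C ≤ 1 := by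
    rw [div_le_one hC0, hC]
    have h5 : 0 < 1 / (p - 1) := by positivity
    linarith
  have hinv2 : 1 / C ≤ p - 1 := by
    rw [div_le_iff₀ hC0, hC]
    have h5 : (p - 1) * (1 / (p - 1)) = 1 := by field_simp
    nlinarith
  have key : (1 / C) * (A * q) ≤ (p - 2) * ip ^ 2 + A * q := by
    rcases le_or_gt 2 p with hp2 | hp2
    · have h1 : 0 ≤ (p - 2) * ip ^ 2 := mul_nonneg (by linarith) (sq_nonneg ip)
      nlinarith [mul_nonneg (by linarith : (0:ℝ) ≤ 1 - 1 / C) (mul_nonneg hA0.le hq0)]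
    · have h1 : (p - 2) * (A * q) ≤ (p - 2) * ip ^ 2 := by
        apply mul_le_mul_of_nonpos_left hCS (by linarith)
      have h2 : (1 / C) * (A * q) ≤ (p - 1) * (A * q) :=
        mul_le_mul_of_nonneg_right hinv2 (mul_nonneg hA0.le hq0)
      linarith [h1, h2]
  have goalEq : 2 * ip * (p / 2 - 1) * A ^ (p / 2 - 1 - 1) * ip + A ^ (p / 2 - 1) * q
      = A ^ (p / 2 - 1 - 1) * ((p - 2) * ip ^ 2 + A * q) := by
    rw [hpow]; ring
  rw [goalEq, hpow]
  calc (1 / C) * (A ^ (p / 2 - 1 - 1) * A) * q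
      = A ^ (p / 2 - 1 - 1) * ((1 / C) * (A * q)) := by ring
    _ ≤ A ^ (p / 2 - 1 - 1) * ((p - 2) * ip ^ 2 + A * q) :=
        mul_le_mul_of_nonneg_left key hB0.le
end

section
/- Let p ∈ [2, ∞), ε > 0, N ≥ 1 and a, b ∈ ℝ^N. Then ( (ε + |a|²)^{(p/2)-1} − |a|^{p-2} ) a · b ≤ C ε (ε + |a|²)^{(p-2)/2} |b|, where C > 1 depends only on N and p. -/
open RealInnerProductSpace

lemma key_ineq (q : ℝ) (hq : 0 ≤ q) (u : ℝ) (hu0 : 0 ≤ u) (hu1 : u ≤ 1) :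
    1 - u ^ q ≤ max 1 q * (1 - u) := by
  have hm : (1:ℝ) ≤ max 1 q := le_max_left _ _
  rcases le_or_gt q 1 with h1 | h1
  · rcases eq_or_lt_of_le hu0 with h0 | h0
    · rcases eq_or_lt_of_le hq with hq0 | hq0
      · simp [← hq0]; linarith
      · rw [← h0, Real.zero_rpow (ne_of_gt hq0)]
        nlinarith
    · have h := Real.rpow_le_rpow_of_exponent_ge h0 hu1 h1
      rw [Real.rpow_one] at h
      nlinarith
  · have hb : 1 + q * (u - 1) ≤ (1 + (u - 1)) ^ q :=
      one_add_mul_self_le_rpow_one_add (by linarith) (le_of_lt h1)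
    have he : (1 + (u - 1)) = u := by ring
    rw [he] at hb
    have hm2 : q ≤ max 1 q := le_max_right _ _
    nlinarith [mul_le_mul_of_nonneg_right hm2 (by linarith : (0:ℝ) ≤ 1 - u)]

theorem stmt_19 (p : ℝ) (hp : 2 ≤ p) (ε : ℝ) (hε : 0 < ε) (N : ℕ) (hN : 1 ≤ N) :
    ∃ C : ℝ, 1 < C ∧ ∀ a b : EuclideanSpace ℝ (Fin N),
      ((ε + ‖a‖ ^ 2) ^ (p / 2 - 1) - ‖a‖ ^ (p - 2)) * (inner ℝ (a) (b) : ℝ) ≤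
        C * ε * (ε + ‖a‖ ^ 2) ^ ((p - 2) / 2) * ‖b‖ := by
  set q : ℝ := p / 2 - 1 with hqdef
  have hq : 0 ≤ q := by simp only [hqdef]; linarith
  set M : ℝ := max 1 q with hMdef
  have hM1 : (1:ℝ) ≤ M := le_max_left _ _
  have hse : 0 < Real.sqrt ε := Real.sqrt_pos.mpr hε
  have hCpos : 0 < M / (2 * Real.sqrt ε) := by positivity
  refine ⟨1 + M / (2 * Real.sqrt ε), by linarith, ?_⟩
  intro a b
  set s : ℝ := ‖a‖ with hsdef
  have hs : 0 ≤ s := norm_nonneg a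
  set t : ℝ := s ^ 2 with htdef
  have ht : 0 ≤ t := sq_nonneg s
  set A : ℝ := ε + t with hAdef
  have hA : 0 < A := by positivity
  have hepq : (p - 2) / 2 = q := by rw [hqdef]; ring
  have hts : s ^ (p - 2) = t ^ q := by
    rw [htdef, ← Real.rpow_natCast s 2, ← Real.rpow_mul hs]
    congr 1
    push_cast
    rw [hqdef]; ring
  have hAq : 0 < A ^ q := Real.rpow_pos_of_pos hA q
  have htA : t ≤ A := by rw [hAdef]; linarith
  have hDnn : 0 ≤ A ^ q - t ^ q := by
    have := Real.rpow_le_rpow ht htA hq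
    linarith
  -- key bound: A^q - t^q ≤ M * ε * A^q / A
  have hkey : A ^ q - t ^ q ≤ M * ε / A * A ^ q := by
    have hu0 : 0 ≤ t / A := by positivity
    have hu1 : t / A ≤ 1 := (div_le_one hA).mpr htA
    have h := key_ineq q hq (t / A) hu0 hu1
    rw [Real.div_rpow ht (le_of_lt hA)] at h
    have h2 : (1 - t ^ q / A ^ q) * A ^ q ≤ M * (1 - t / A) * A ^ q :=
      mul_le_mul_of_nonneg_right h (le_of_lt hAq)
    have e1 : (1 - t ^ q / A ^ q) * A ^ q = A ^ q - t ^ q := by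
      field_simp
    have e2 : M * (1 - t / A) = M * ε / A := by
      rw [hAdef]; field_simp; ring
    rw [e1, e2] at h2
    exact h2
  -- s/A ≤ 1/(2 √ε)
  have hsA : 2 * Real.sqrt ε * s ≤ A := by
    have h1 : 0 ≤ (Real.sqrt ε - s) ^ 2 := sq_nonneg _
    have h2 : Real.sqrt ε ^ 2 = ε := Real.sq_sqrt (le_of_lt hε)
    rw [hAdef, htdef]; nlinarith
  -- main scalar bound
  have hmain : (A ^ q - t ^ q) * s ≤ (1 + M / (2 * Real.sqrt ε)) * ε * A ^ q := by
    have h1 : (A ^ q - t ^ q) * s ≤ (M * ε / A * A ^ q) * s :=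
      mul_le_mul_of_nonneg_right hkey hs
    have h2 : (M * ε / A * A ^ q) * s ≤ M / (2 * Real.sqrt ε) * ε * A ^ q := by
      simp only [div_mul_eq_mul_div]
      rw [div_le_div_iff₀ hA (by positivity)]
      nlinarith [mul_le_mul_of_nonneg_left hsA (by positivity : (0:ℝ) ≤ M * ε * A ^ q)]
    have h3 : M / (2 * Real.sqrt ε) * ε * A ^ q ≤ (1 + M / (2 * Real.sqrt ε)) * ε * A ^ q := by
      have : (0:ℝ) ≤ ε * A ^ q := by positivity
      nlinarith
    linarith
  -- assemble
  rw [hepq, hts]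
  calc (A ^ q - t ^ q) * (inner ℝ a b : ℝ)
      ≤ (A ^ q - t ^ q) * (s * ‖b‖) := by
        apply mul_le_mul_of_nonneg_left _ hDnn
        exact real_inner_le_norm a b
    _ = (A ^ q - t ^ q) * s * ‖b‖ := by ring
    _ ≤ (1 + M / (2 * Real.sqrt ε)) * ε * A ^ q * ‖b‖ :=
        mul_le_mul_of_nonneg_right hmain (norm_nonneg b)
end
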